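/- Taylor-type norm bound: let Z be a random variable with 0 ≤ Z ≤ K for a constant K > 0 and E[Z] = 1, and let 0 ≤ u ≤ 1. Then 1 + u·Ent(Z) - u²·L₁(K) ≤ ‖Z‖_{1+u} ≤ 1 + u·Ent(Z) + u²·L₀(K), where L₀(K) = (1/2)·max{K^u, 1}·max_{0≤z≤K} z(log z)² and L₁(K) = M + M²/2 with M = max_{0≤z≤K} |z log z|. -/

import Mathlib

open Finset Real

section helpers

private lemma myExp_le_neg (x : ℝ) (hx : x ≤ 0) : Real.exp x ≤ 1 + x + x^2/2 := by
  have hd : ∀ y : ℝ, HasDerivAt (fun t => Real.exp t - 1 - t - t^2/2) (Real.exp y - 1 - y) y := by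
    intro y
    have h := (((Real.hasDerivAt_exp y).sub_const 1).sub (hasDerivAt_id y)).sub
      ((hasDerivAt_pow 2 y).div_const 2)
    refine h.congr_deriv ?_
    norm_num
  have hmono : Monotone (fun t => Real.exp t - 1 - t - t^2/2) := by
    apply monotone_of_deriv_nonneg (fun y => (hd y).differentiableAt)
    intro y
    rw [(hd y).deriv]
    have := Real.add_one_le_exp y
    linarith
  have := hmono hx
  simp at this
  nlinarith [this]

private lemma myExp_le_pos (x : ℝ) (hx : 0 ≤ x) : Real.exp x ≤ 1 + x + x^2/2 * Real.exp x := by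
  have hd : ∀ y : ℝ, HasDerivAt (fun t => Real.exp t - 1 - t - t^2/2 * Real.exp t)
      (Real.exp y - 1 - (y * Real.exp y + y^2/2 * Real.exp y)) y := by
    intro y
    have h2 : HasDerivAt (fun t : ℝ => t^2/2 * Real.exp t)
        (y * Real.exp y + y^2/2 * Real.exp y) y := by
      have := ((hasDerivAt_pow 2 y).div_const 2).mul (Real.hasDerivAt_exp y)
      refine this.congr_deriv ?_
      push_cast; ring
    have h := (((Real.hasDerivAt_exp y).sub_const 1).sub (hasDerivAt_id y)).sub h2
    exact h
  have hanti : Antitone (fun t => Real.exp t - 1 - t - t^2/2 * Real.exp t) := by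
    apply antitone_of_deriv_nonpos (fun y => (hd y).differentiableAt)
    intro y
    rw [(hd y).deriv]
    have h1 : 1 - y ≤ Real.exp (-y) := by linarith [Real.add_one_le_exp (-y)]
    have h2 : Real.exp y * Real.exp (-y) = 1 := by
      rw [← Real.exp_add]; simp
    have h3 : Real.exp y * (1 - y) ≤ 1 := by
      calc Real.exp y * (1 - y) ≤ Real.exp y * Real.exp (-y) :=
        mul_le_mul_of_nonneg_left h1 (Real.exp_pos y).le
      _ = 1 := h2
    nlinarith [Real.exp_pos y, sq_nonneg y]
  have := hanti hx
  simp at this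
  nlinarith [this]

private lemma myExp_taylor_ub (x : ℝ) : Real.exp x ≤ 1 + x + x^2/2 * max (Real.exp x) 1 := by
  rcases le_total x 0 with h | h
  · rw [max_eq_right (Real.exp_le_one_iff.mpr h)]
    simpa using myExp_le_neg x h
  · rw [max_eq_left (Real.one_le_exp h)]
    exact myExp_le_pos x h

private lemma myAbs_mul_log_le {z C : ℝ} (hz : 0 ≤ z) (hzC : z ≤ C) :
    |z * Real.log z| ≤ max 1 (C * |Real.log C|) := by
  rcases eq_or_lt_of_le hz with rfl | hz0
  · simp
  rcases le_total z 1 with h1 | h1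
  · have hlog : Real.log z ≤ 0 := Real.log_nonpos hz h1
    have habs : |z * Real.log z| = z * (- Real.log z) := by
      rw [abs_of_nonpos (mul_nonpos_of_nonneg_of_nonpos hz hlog)]; ring
    have hinv : Real.log z⁻¹ ≤ z⁻¹ - 1 := Real.log_le_sub_one_of_pos (by positivity)
    rw [Real.log_inv] at hinv
    have : z * (- Real.log z) ≤ z * (z⁻¹ - 1) := mul_le_mul_of_nonneg_left hinv hz
    have hzi : z * z⁻¹ = 1 := mul_inv_cancel₀ (ne_of_gt hz0)
    refine le_max_of_le_left ?_
    rw [habs]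
    nlinarith
  · have hC1 : 1 ≤ C := le_trans h1 hzC
    have hlz : 0 ≤ Real.log z := Real.log_nonneg h1
    have habs : |z * Real.log z| = z * Real.log z := abs_of_nonneg (by positivity)
    have : z * Real.log z ≤ C * Real.log C :=
      mul_le_mul hzC (Real.log_le_log hz0 hzC) hlz (by linarith)
    rw [habs]
    refine le_max_of_le_right ?_
    rwa [abs_of_nonneg (Real.log_nonneg hC1)]

private lemma myMul_sq_log_le {z C : ℝ} (hz : 0 ≤ z) (hzC : z ≤ C) :
    z * (Real.log z)^2 ≤ 4 * (max 1 (Real.sqrt C * |Real.log (Real.sqrt C)|))^2 := by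
  have key : z * (Real.log z)^2 = 4 * (Real.sqrt z * Real.log (Real.sqrt z))^2 := by
    rw [Real.log_sqrt hz, mul_pow, Real.sq_sqrt hz]
    ring
  rw [key]
  have h1 : |Real.sqrt z * Real.log (Real.sqrt z)| ≤
      max 1 (Real.sqrt C * |Real.log (Real.sqrt C)|) :=
    myAbs_mul_log_le (Real.sqrt_nonneg z) (Real.sqrt_le_sqrt hzC)
  have h2 : (Real.sqrt z * Real.log (Real.sqrt z))^2 ≤
      (max 1 (Real.sqrt C * |Real.log (Real.sqrt C)|))^2 := by
    rw [← sq_abs]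
    exact pow_le_pow_left₀ (abs_nonneg _) h1 2
  linarith

end helpers

noncomputable def fexp {Ω : Type*} [Fintype Ω] (w : Ω → ℝ) (f : Ω → ℝ) : ℝ :=
  ∑ ω, w ω * f ω

def IsProbWeight {Ω : Type*} [Fintype Ω] (w : Ω → ℝ) : Prop :=
  (∀ ω, 0 ≤ w ω) ∧ ∑ ω, w ω = 1

noncomputable def maxCorr {Ω A B : Type*} [Fintype Ω] (w : Ω → ℝ)
    (X : Ω → A) (Y : Ω → B) : ℝ :=
  sSup { r : ℝ | ∃ f : A → ℝ, ∃ g : B → ℝ,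
    fexp w (fun ω => f (X ω)) = 0 ∧ fexp w (fun ω => g (Y ω)) = 0 ∧
    fexp w (fun ω => (f (X ω))^2) ≤ 1 ∧ fexp w (fun ω => (g (Y ω))^2) ≤ 1 ∧
    r = fexp w (fun ω => f (X ω) * g (Y ω)) }

noncomputable def ent {Ω : Type*} [Fintype Ω] (w Z : Ω → ℝ) : ℝ :=
  fexp w (fun ω => Z ω * Real.log (Z ω)) - fexp w Z * Real.log (fexp w Z)

set_option maxHeartbeats 2000000 in
theorem taylor_norm_bound {Ω : Type*} [Fintype Ω] (w : Ω → ℝ) (hw : IsProbWeight w)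
    (Z : Ω → ℝ) (K : ℝ) (hK : 0 < K) (hZ0 : ∀ ω, 0 ≤ Z ω) (hZK : ∀ ω, Z ω ≤ K)
    (hEZ : fexp w Z = 1) (u : ℝ) (hu0 : 0 ≤ u) (hu1 : u ≤ 1)
    (M L0 L1 : ℝ)
    (hM : M = ⨆ z : Set.Icc (0:ℝ) K, |(z : ℝ) * Real.log z|)
    (hL0 : L0 = (1/2) * max (K ^ u) 1 * ⨆ z : Set.Icc (0:ℝ) K, (z : ℝ) * (Real.log z)^2)
    (hL1 : L1 = M + M^2 / 2) :
    1 + u * ent w Z - u^2 * L1 ≤ (fexp w (fun ω => Z ω ^ (1+u))) ^ (1/(1+u)) ∧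
    (fexp w (fun ω => Z ω ^ (1+u))) ^ (1/(1+u)) ≤ 1 + u * ent w Z + u^2 * L0 := by
  obtain ⟨hw0, hw1⟩ := hw
  have h1u : (0:ℝ) < 1 + u := by linarith
  set e := fexp w (fun ω => Z ω * Real.log (Z ω)) with he_def
  clear_value e
  have hent : ent w Z = e := by rw [he_def]; simp [ent, hEZ]
  set S := (⨆ z : Set.Icc (0:ℝ) K, (z : ℝ) * (Real.log z)^2) with hS_def
  clear_value S
  set P := fexp w (fun ω => Z ω ^ (1+u)) with hP_def
  clear_value P
  -- bounds from the suprema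
  have hMbdd : BddAbove (Set.range fun z : Set.Icc (0:ℝ) K => |(z:ℝ) * Real.log z|) := by
    refine ⟨max 1 (K * |Real.log K|), ?_⟩
    rintro x ⟨⟨z, hz0, hzK⟩, rfl⟩
    exact myAbs_mul_log_le hz0 hzK
  have hSbdd : BddAbove (Set.range fun z : Set.Icc (0:ℝ) K => (z:ℝ) * (Real.log z)^2) := by
    refine ⟨4 * (max 1 (Real.sqrt K * |Real.log (Real.sqrt K)|))^2, ?_⟩
    rintro x ⟨⟨z, hz0, hzK⟩, rfl⟩
    exact myMul_sq_log_le hz0 hzK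
  have hMle : ∀ ω, |Z ω * Real.log (Z ω)| ≤ M := by
    intro ω; rw [hM]
    exact le_ciSup hMbdd ⟨Z ω, hZ0 ω, hZK ω⟩
  have hSle : ∀ ω, Z ω * (Real.log (Z ω))^2 ≤ S := by
    intro ω; rw [hS_def]
    exact le_ciSup hSbdd ⟨Z ω, hZ0 ω, hZK ω⟩
  -- e ≥ 0
  have hpt0 : ∀ ω, Z ω - 1 ≤ Z ω * Real.log (Z ω) := by
    intro ω
    rcases eq_or_lt_of_le (hZ0 ω) with h | h
    · rw [← h]; norm_num
    · have hinv : Real.log (Z ω)⁻¹ ≤ (Z ω)⁻¹ - 1 := Real.log_le_sub_one_of_pos (by positivity)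
      rw [Real.log_inv] at hinv
      have h2 := mul_le_mul_of_nonneg_left hinv h.le
      have hzi : Z ω * (Z ω)⁻¹ = 1 := mul_inv_cancel₀ (ne_of_gt h)
      nlinarith
  have he0 : 0 ≤ e := by
    have hs : ∑ ω, w ω * (Z ω - 1) ≤ ∑ ω, w ω * (Z ω * Real.log (Z ω)) :=
      Finset.sum_le_sum fun ω _ => mul_le_mul_of_nonneg_left (hpt0 ω) (hw0 ω)
    have hsplit : ∑ ω, w ω * (Z ω - 1) = (∑ ω, w ω * Z ω) - ∑ ω, w ω := by
      rw [← Finset.sum_sub_distrib]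
      exact Finset.sum_congr rfl fun ω _ => by ring
    have hEZ' : ∑ ω, w ω * Z ω = 1 := hEZ
    rw [hsplit, hEZ', hw1] at hs
    simpa [he_def, fexp] using hs
  -- e ≤ M
  have heM : e ≤ M := by
    have hs : ∑ ω, w ω * (Z ω * Real.log (Z ω)) ≤ ∑ ω, w ω * M :=
      Finset.sum_le_sum fun ω _ => mul_le_mul_of_nonneg_left
        ((le_abs_self _).trans (hMle ω)) (hw0 ω)
    rw [← Finset.sum_mul, hw1, one_mul] at hs
    simpa [he_def, fexp] using hs
  have hM0 : 0 ≤ M := le_trans he0 heM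
  -- pointwise lower bound
  have hpl : ∀ ω, Z ω + u * (Z ω * Real.log (Z ω)) ≤ Z ω ^ (1+u) := by
    intro ω
    rcases eq_or_lt_of_le (hZ0 ω) with h | h
    · rw [← h, Real.zero_rpow (ne_of_gt h1u)]; norm_num
    · have hrw : Z ω ^ (1+u) = Z ω * Real.exp (Real.log (Z ω) * u) := by
        rw [Real.rpow_def_of_pos h, mul_add, mul_one, Real.exp_add, Real.exp_log h]
      rw [hrw]
      calc Z ω + u * (Z ω * Real.log (Z ω)) = Z ω * (Real.log (Z ω) * u + 1) := by ring
      _ ≤ Z ω * Real.exp (Real.log (Z ω) * u) :=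
        mul_le_mul_of_nonneg_left (Real.add_one_le_exp _) h.le
  -- pointwise upper bound
  have hpu : ∀ ω, Z ω ^ (1+u) ≤ Z ω + u * (Z ω * Real.log (Z ω))
      + u^2/2 * max (K^u) 1 * (Z ω * (Real.log (Z ω))^2) := by
    intro ω
    rcases eq_or_lt_of_le (hZ0 ω) with h | h
    · rw [← h, Real.zero_rpow (ne_of_gt h1u)]; norm_num
    · set x := Real.log (Z ω) * u with hx_def
      have hrw : Z ω ^ (1+u) = Z ω * Real.exp x := by
        rw [Real.rpow_def_of_pos h, mul_add, mul_one, Real.exp_add, Real.exp_log h]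
      have hmax : max (Real.exp x) 1 ≤ max (K^u) 1 := by
        apply max_le_max _ le_rfl
        have hx : Real.exp x = Z ω ^ u := (Real.rpow_def_of_pos h u).symm
        rw [hx]
        exact Real.rpow_le_rpow (hZ0 ω) (hZK ω) hu0
      have hexp2 : Real.exp x ≤ 1 + x + x^2/2 * max (K^u) 1 := by
        refine (myExp_taylor_ub x).trans ?_
        have : x^2/2 * max (Real.exp x) 1 ≤ x^2/2 * max (K^u) 1 :=
          mul_le_mul_of_nonneg_left hmax (by positivity)
        linarith
      rw [hrw]
      calc Z ω * Real.exp x ≤ Z ω * (1 + x + x^2/2 * max (K^u) 1) :=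
        mul_le_mul_of_nonneg_left hexp2 h.le
      _ = Z ω + u * (Z ω * Real.log (Z ω))
          + u^2/2 * max (K^u) 1 * (Z ω * (Real.log (Z ω))^2) := by
        rw [hx_def]; ring
  -- sum bounds
  have hPlb : 1 + u * e ≤ P := by
    have hs : ∑ ω, w ω * (Z ω + u * (Z ω * Real.log (Z ω))) ≤ ∑ ω, w ω * Z ω ^ (1+u) :=
      Finset.sum_le_sum fun ω _ => mul_le_mul_of_nonneg_left (hpl ω) (hw0 ω)
    have hsplit : ∑ ω, w ω * (Z ω + u * (Z ω * Real.log (Z ω)))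
        = (∑ ω, w ω * Z ω) + u * ∑ ω, w ω * (Z ω * Real.log (Z ω)) := by
      rw [Finset.mul_sum, ← Finset.sum_add_distrib]
      exact Finset.sum_congr rfl fun ω _ => by ring
    have hEZ' : ∑ ω, w ω * Z ω = 1 := hEZ
    rw [hsplit, hEZ'] at hs
    simpa [hP_def, he_def, fexp] using hs
  have hPub : P ≤ 1 + u * e + u^2/2 * max (K^u) 1 * S := by
    have hs : ∑ ω, w ω * Z ω ^ (1+u) ≤ ∑ ω, w ω * (Z ω + u * (Z ω * Real.log (Z ω))
        + u^2/2 * max (K^u) 1 * (Z ω * (Real.log (Z ω))^2)) :=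
      Finset.sum_le_sum fun ω _ => mul_le_mul_of_nonneg_left (hpu ω) (hw0 ω)
    have hc : (0:ℝ) ≤ u^2/2 * max (K^u) 1 := by positivity
    have hs2 : ∑ ω, w ω * (Z ω + u * (Z ω * Real.log (Z ω))
        + u^2/2 * max (K^u) 1 * (Z ω * (Real.log (Z ω))^2))
        ≤ ∑ ω, w ω * (Z ω + u * (Z ω * Real.log (Z ω)) + u^2/2 * max (K^u) 1 * S) := by
      refine Finset.sum_le_sum fun ω _ => mul_le_mul_of_nonneg_left ?_ (hw0 ω)
      have := mul_le_mul_of_nonneg_left (hSle ω) hc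
      linarith
    have hsplit : ∑ ω, w ω * (Z ω + u * (Z ω * Real.log (Z ω)) + u^2/2 * max (K^u) 1 * S)
        = (∑ ω, w ω * Z ω) + u * (∑ ω, w ω * (Z ω * Real.log (Z ω)))
          + u^2/2 * max (K^u) 1 * S * (∑ ω, w ω) := by
      rw [Finset.mul_sum, Finset.mul_sum, ← Finset.sum_add_distrib, ← Finset.sum_add_distrib]
      exact Finset.sum_congr rfl fun ω _ => by ring
    have hEZ' : ∑ ω, w ω * Z ω = 1 := hEZ
    rw [hsplit, hEZ', hw1, mul_one] at hs2
    have := hs.trans hs2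
    simpa [hP_def, he_def, fexp] using this
  have hP1 : 1 ≤ P := le_trans (by nlinarith [mul_nonneg hu0 he0]) hPlb
  constructor
  · -- lower bound
    set t := u * e with ht_def
    clear_value t
    have ht0 : 0 ≤ t := ht_def ▸ mul_nonneg hu0 he0
    have h1t : (0:ℝ) < 1 + t := by linarith
    have h3 : (1+t) ^ (1/(1+u)) ≤ P ^ (1/(1+u)) :=
      Real.rpow_le_rpow h1t.le hPlb (by positivity)
    set r := u / (1+u) with hr_def
    clear_value r
    have hr : 1/(1+u) - 1 = -r := by rw [hr_def]; field_simp; ring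
    have hr0 : 0 ≤ r := by rw [hr_def]; positivity
    have hr_half : r ≤ 1/2 := by
      rw [hr_def, div_le_iff₀ h1u]; linarith
    have hru : r ≤ u := hr_def ▸ div_le_self hu0 (by linarith)
    set L := Real.log (1+t) with hL_def
    clear_value L
    have hlog_le : L ≤ t := by
      have := Real.log_le_sub_one_of_pos h1t; rw [hL_def]; linarith
    have hlog0 : 0 ≤ L := by
      rw [hL_def]; exact Real.log_nonneg (by linarith)
    have hexp_lb : 1 + (-r) * L ≤ (1+t) ^ (-r : ℝ) := by
      rw [Real.rpow_def_of_pos h1t, ← hL_def]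
      nlinarith [Real.add_one_le_exp (L * (-r))]
    have hsplit : (1+t) ^ (1/(1+u)) = (1+t) * (1+t) ^ (-r : ℝ) := by
      have h1 : (1:ℝ) + (-r) = 1/(1+u) := by rw [← hr]; ring
      rw [← h1, Real.rpow_add h1t, Real.rpow_one]
    have key : (1+t) * (1 + (-r) * L) ≤ (1+t) ^ (1/(1+u)) := by
      rw [hsplit]
      exact mul_le_mul_of_nonneg_left hexp_lb h1t.le
    have b1 : r * L ≤ u^2 * M := by
      calc r * L ≤ r * t := mul_le_mul_of_nonneg_left hlog_le hr0
      _ ≤ u * t := mul_le_mul_of_nonneg_right hru ht0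
      _ = u^2 * e := by rw [ht_def]; ring
      _ ≤ u^2 * M := mul_le_mul_of_nonneg_left heM (sq_nonneg u)
    have b2 : r * (t * L) ≤ u^2 * (M^2/2) := by
      calc r * (t * L) ≤ r * (t * t) :=
        mul_le_mul_of_nonneg_left (mul_le_mul_of_nonneg_left hlog_le ht0) hr0
      _ ≤ (1/2) * (t * t) := mul_le_mul_of_nonneg_right hr_half (mul_nonneg ht0 ht0)
      _ = u^2 * (e*e/2) := by rw [ht_def]; ring
      _ ≤ u^2 * (M^2/2) := by
        apply mul_le_mul_of_nonneg_left _ (sq_nonneg u)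
        nlinarith
    have hexpand : (1+t) * (1 + (-r) * L) = 1 + t - r*L - r*(t*L) := by ring
    rw [hent, hL1]
    have key2 : 1 + t - r*L - r*(t*L) ≤ (1+t) ^ (1/(1+u)) := by
      rw [← hexpand]; exact key
    have hring : u^2 * (M + M^2/2) = u^2*M + u^2*(M^2/2) := by ring
    have hfin : 1 + u * e - u^2 * (M + M^2/2) ≤ (1+t) ^ (1/(1+u)) := by
      linarith [key2, b1, b2, ht_def, hring]
    calc 1 + u * e - u^2 * (M + M^2/2) ≤ (1+t) ^ (1/(1+u)) := hfin
    _ ≤ P ^ (1/(1+u)) := h3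
  · -- upper bound
    have hle1 : 1/(1+u) ≤ 1 := by
      rw [div_le_one h1u]; linarith
    calc P ^ (1/(1+u)) ≤ P ^ (1:ℝ) := Real.rpow_le_rpow_of_exponent_le hP1 hle1
    _ = P := Real.rpow_one P
    _ ≤ 1 + u * e + u^2/2 * max (K^u) 1 * S := hPub
    _ = 1 + u * ent w Z + u^2 * L0 := by rw [hent, hL0, hS_def]; ring
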